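/- Let A be a complex C*-algebra and let τ : A → ℂ be a continuous linear functional that is positive (τ(a⋆ * a) is a nonnegative real for every a ∈ A) and tracial (τ(a * b) = τ(b * a) for all a, b ∈ A). Then there exists a linear functional τ̃ on the multiplier algebra 𝓜(ℂ, A) of A such that: τ̃ is continuous with operator norm equal to that of τ; τ̃ is positive, i.e. τ̃(m⋆ * m) is a nonnegative real for every m ∈ 𝓜(ℂ, A); τ̃ is tracial, i.e. τ̃(m * n) = τ̃(n * m) for all m, n ∈ 𝓜(ℂ, A); and τ̃ extends τ, i.e. τ̃(ι(a)) = τ(a) for all a ∈ A, where ι : A → 𝓜(ℂ, A) is the canonical embedding of A into its multiplier algebra. -/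

import Mathlib

open scoped MultiplierAlgebra ComplexOrder
open Filter Topology Metric DoubleCentralizer

namespace TraceExtensionAux

variable {A : Type*} [NonUnitalCStarAlgebra A]

/-! ### Pure algebra in the multiplier algebra -/

lemma eq_zero_of_forall_mul (d : A) (h : ∀ z : A, z * d = 0) : d = 0 := by
  have h2 : ‖d‖ * ‖d‖ = 0 := by rw [← CStarRing.norm_star_mul_self, h (star d), norm_zero]
  simpa using mul_self_eq_zero.mp h2

lemma fst_mul_right (m : 𝓜(ℂ, A)) (x y : A) : m.fst (x * y) = m.fst x * y := by
  have key : ∀ z : A, z * (m.fst (x * y) - m.fst x * y) = 0 := by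
    intro z
    have h1 : z * m.fst (x * y) = m.snd z * (x * y) := (m.central z (x * y)).symm
    have h3 : m.snd z * x = z * m.fst x := m.central z x
    rw [mul_sub, h1, ← mul_assoc, h3, mul_assoc, sub_self]
  exact sub_eq_zero.mp (eq_zero_of_forall_mul _ key)

lemma star_mul_fst (q : 𝓜(ℂ, A)) (x b : A) :
    star x * q.fst b = star ((star q).fst x) * b := by
  have h1 : star x * q.fst b = q.snd (star x) * b := (q.central (star x) b).symm
  have h2 : (star q).fst x = star (q.snd (star x)) := star_fst q x
  rw [h1, ← star_star (q.snd (star x)), ← h2]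

lemma star_fst_mul_fst (m : 𝓜(ℂ, A)) (x : A) :
    star x * (star m * m).fst x = star (m.fst x) * m.fst x := by
  have h : (star m * m).fst x = (star m).fst (m.fst x) := by
    rw [mul_fst]; rfl
  rw [h, star_mul_fst (star m) x (m.fst x), star_star]

lemma star_fst_sq (q : 𝓜(ℂ, A)) (hq : star q = q) (x : A) :
    star x * (q * q).fst x = star (q.fst x) * q.fst x := by
  have h := star_fst_mul_fst q x
  rwa [hq] at h

lemma norm_fst_apply_le (m : 𝓜(ℂ, A)) (x : A) : ‖m.fst x‖ ≤ ‖m‖ * ‖x‖ := by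
  simpa [norm_fst] using (m.fst).le_opNorm x

/-! ### The order structure on a non-unital C⋆-algebra -/

noncomputable def pOrd : PartialOrder A :=
  letI : PartialOrder (Unitization ℂ A) := CStarAlgebra.spectralOrder _
  PartialOrder.lift ((↑) : A → Unitization ℂ A) (Unitization.inr_injective (R := ℂ))

lemma sOrd : letI := pOrd (A := A); StarOrderedRing A := by
  letI := pOrd (A := A)
  letI : PartialOrder (Unitization ℂ A) := CStarAlgebra.spectralOrder _
  haveI : StarOrderedRing (Unitization ℂ A) := CStarAlgebra.spectralOrderedRing _
  refine StarOrderedRing.of_le_iff fun a b => ?_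
  constructor
  · intro hab
    have hab' : (a : Unitization ℂ A) ≤ (b : Unitization ℂ A) := hab
    have hd : ((b : Unitization ℂ A) - a) = ((b - a : A) : Unitization ℂ A) := by
      rw [Unitization.inr_sub]
    have hsa : IsSelfAdjoint ((b - a : A) : Unitization ℂ A) := hd ▸ hab'.1
    have hdsa : IsSelfAdjoint (b - a) := (Unitization.isSelfAdjoint_inr (R := ℂ)).mp hsa
    have hspec : ∀ x ∈ quasispectrum ℝ (b - a), 0 ≤ x := by
      rw [Unitization.quasispectrum_eq_spectrum_inr' ℝ ℂ]
      exact SpectrumRestricts.nnreal_iff.mp (hd ▸ hab'.2)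
    set s : A := cfcₙ Real.sqrt (b - a) with hs
    have hssa : IsSelfAdjoint s := cfcₙ_predicate Real.sqrt (b - a)
    have hmul : s * s = b - a := by
      rw [hs, ← cfcₙ_mul Real.sqrt Real.sqrt (b - a)
        (by exact Real.continuous_sqrt.continuousOn) (by simp)
        (by exact Real.continuous_sqrt.continuousOn) (by simp)]
      rw [cfcₙ_congr (f := fun x : ℝ => Real.sqrt x * Real.sqrt x) (g := (id : ℝ → ℝ))
        fun x hx => Real.mul_self_sqrt (hspec x hx)]
      exact cfcₙ_id ℝ (b - a) hdsa
    exact ⟨s, by rw [hssa.star_eq, hmul, add_sub_cancel]⟩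
  · rintro ⟨s, rfl⟩
    show (a : Unitization ℂ A) ≤ ((a + star s * s : A) : Unitization ℂ A)
    rw [Unitization.inr_add, Unitization.inr_mul, Unitization.inr_star]
    exact le_add_of_nonneg_right (star_mul_self_nonneg _)

/-! ### Positive tracial functionals: basic facts -/

section WithOrder

variable [PartialOrder A] [StarOrderedRing A] {τ : A →L[ℂ] ℂ}

lemma tau_im (hpos : ∀ a : A, 0 ≤ τ (star a * a)) (a : A) : (τ (star a * a)).im = 0 := by
  have := hpos a
  rw [Complex.le_def] at this
  simpa using this.2.symm

lemma tau_re_nonneg (hpos : ∀ a : A, 0 ≤ τ (star a * a)) (a : A) :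
    0 ≤ (τ (star a * a)).re := by
  have := hpos a
  rw [Complex.le_def] at this
  simpa using this.1

lemma tau_nonneg (hpos : ∀ a : A, 0 ≤ τ (star a * a)) {d : A} (hd : 0 ≤ d) : 0 ≤ τ d := by
  rw [StarOrderedRing.nonneg_iff] at hd
  induction hd using AddSubmonoid.closure_induction with
  | mem x hx => obtain ⟨s, rfl⟩ := hx; exact hpos s
  | zero => simp
  | add x y _ _ hx hy => rw [map_add]; exact add_nonneg hx hy

lemma tau_mono (hpos : ∀ a : A, 0 ≤ τ (star a * a)) {a b : A} (hab : a ≤ b) :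
    (τ a).re ≤ (τ b).re := by
  have h0 : 0 ≤ τ (b - a) := tau_nonneg hpos (sub_nonneg.mpr hab)
  rw [Complex.le_def] at h0
  have : (τ (b - a)).re = (τ b).re - (τ a).re := by rw [map_sub, Complex.sub_re]
  simpa [this] using h0.1

lemma smul_nonneg'' {t : ℝ} (ht : 0 ≤ t) {a : A} (ha : 0 ≤ a) : 0 ≤ t • a := by
  rw [StarOrderedRing.nonneg_iff] at ha ⊢
  induction ha using AddSubmonoid.closure_induction with
  | mem x hx =>
    obtain ⟨s, rfl⟩ := hx
    refine AddSubmonoid.subset_closure ⟨Real.sqrt t • s, ?_⟩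
    show star (Real.sqrt t • s) * (Real.sqrt t • s) = t • (star s * s)
    rw [star_smul, star_trivial, smul_mul_assoc, mul_smul_comm, smul_smul,
      Real.mul_self_sqrt ht]
  | zero => simpa using AddSubmonoid.zero_mem _
  | add x y _ _ hx hy => rw [smul_add]; exact AddSubmonoid.add_mem _ hx hy

/-- Hermitian symmetry of the sesquilinear form attached to a positive functional. -/
lemma tau_herm (hpos : ∀ a : A, 0 ≤ τ (star a * a)) (x y : A) :
    (starRingEnd ℂ) (τ (star y * x)) = τ (star x * y) := by
  set p := τ (star x * y) with hp
  set q := τ (star y * x) with hq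
  have e1 : (p + q).im = 0 := by
    have hexp : τ (star (x + y) * (x + y))
        = τ (star x * x) + (p + q) + τ (star y * y) := by
      rw [hp, hq]
      simp only [star_add, add_mul, mul_add, map_add]
      ring
    have := tau_im hpos (x + y)
    rw [hexp] at this
    simpa [tau_im hpos x, tau_im hpos y] using this
  have e2 : (p - q).re = 0 := by
    have hstar : star (x + Complex.I • y) = star x - Complex.I • star y := by
      rw [star_add, star_smul]
      simp [Complex.conj_I, sub_eq_add_neg, neg_smul]
    have hexp : τ (star (x + Complex.I • y) * (x + Complex.I • y))
        = τ (star x * x) + Complex.I * p - Complex.I * q + τ (star y * y) := by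
      rw [hstar, hp, hq]
      have expand : (star x - Complex.I • star y) * (x + Complex.I • y)
          = star x * x + Complex.I • (star x * y) - Complex.I • (star y * x)
            + star y * y := by
        rw [sub_mul, mul_add, mul_add, mul_smul_comm, smul_mul_assoc, smul_mul_assoc,
          mul_smul_comm, smul_smul, Complex.I_mul_I, neg_one_smul]
        abel
      rw [expand]
      simp only [map_add, map_sub, map_smul, smul_eq_mul]
    have := tau_im hpos (x + Complex.I • y)
    rw [hexp] at this
    have h' : (Complex.I * p).im - (Complex.I * q).im = 0 := by
      simpa [tau_im hpos x, tau_im hpos y, Complex.sub_im, Complex.add_im] using this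
    simpa [Complex.mul_im, Complex.sub_re] using h'
  have hre : q.re = p.re := by
    have := e2
    simp only [Complex.sub_re] at this
    linarith
  have him : q.im = -p.im := by
    have := e1
    simp only [Complex.add_im] at this
    linarith
  apply Complex.ext <;> simp [hre, him]

/-- Cauchy–Schwarz for the positive sesquilinear form of `τ`. -/
lemma tau_cs (hpos : ∀ a : A, 0 ≤ τ (star a * a)) (x y : A) :
    ‖τ (star x * y)‖ ^ 2 ≤ (τ (star x * x)).re * (τ (star y * y)).re := by
  letI innerA : Inner ℂ A := ⟨fun x y => τ (star x * y)⟩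
  letI core : PreInnerProductSpace.Core ℂ A :=
    { inner := fun x y => τ (star x * y)
      conj_inner_symm := fun x y => tau_herm hpos x y
      re_inner_nonneg := fun x => by simpa using tau_re_nonneg hpos x
      add_left := fun x y z => by simp [star_add, add_mul]
      smul_left := fun x y r => by
        simp [star_smul, smul_mul_assoc, map_smul, smul_eq_mul] }
  have h := InnerProductSpace.Core.inner_mul_inner_self_le (𝕜 := ℂ) (F := A) x y
  have h2 : ‖τ (star x * y)‖ * ‖τ (star y * x)‖
      ≤ (τ (star x * x)).re * (τ (star y * y)).re := h
  have hnorm : ‖τ (star y * x)‖ = ‖τ (star x * y)‖ := by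
    rw [← tau_herm hpos x y]
    exact (RCLike.norm_conj _).symm
  rw [hnorm] at h2
  simpa [pow_two] using h2

lemma tau_re_le (x : A) : (τ (star x * x)).re ≤ ‖τ‖ * ‖x‖ ^ 2 := by
  calc (τ (star x * x)).re ≤ ‖τ (star x * x)‖ := Complex.re_le_norm _
    _ ≤ ‖τ‖ * ‖star x * x‖ := τ.le_opNorm _
    _ = ‖τ‖ * ‖x‖ ^ 2 := by rw [CStarRing.norm_star_mul_self, pow_two]

/-- The key conjugation estimate: conjugating by a multiplier. -/
lemma conj_bound (hpos : ∀ a : A, 0 ≤ τ (star a * a)) (m : 𝓜(ℂ, A)) (c : A) :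
    (τ (star (m.fst c) * m.fst c)).re ≤ ‖m‖ ^ 2 * (τ (star c * c)).re := by
  letI : PartialOrder 𝓜(ℂ, A) := CStarAlgebra.spectralOrder _
  haveI : StarOrderedRing 𝓜(ℂ, A) := CStarAlgebra.spectralOrderedRing _
  set r : 𝓜(ℂ, A) := algebraMap ℝ _ (‖m‖ ^ 2) - star m * m with hr_def
  have hr : 0 ≤ r := sub_nonneg.mpr CStarAlgebra.star_mul_le_algebraMap_norm_sq
  set q : 𝓜(ℂ, A) := CFC.sqrt r with hq_def
  have hq0 : 0 ≤ q := CFC.sqrt_nonneg r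
  have hqq : q * q = r := CFC.sqrt_mul_sqrt_self r hr
  have hqsa : star q = q := (IsSelfAdjoint.of_nonneg hq0).star_eq
  have key : star c * r.fst c = star (q.fst c) * q.fst c := by
    conv_lhs => rw [← hqq]
    exact star_fst_sq q hqsa c
  have pos1 : 0 ≤ (τ (star (q.fst c) * q.fst c)).re := tau_re_nonneg hpos _
  have hfst : r.fst c = (‖m‖ ^ 2 : ℝ) • c - (star m * m).fst c := by
    rw [hr_def, sub_fst, ContinuousLinearMap.sub_apply]
    congr 1
  have hsplit : τ (star c * r.fst c)
      = (‖m‖ ^ 2 : ℝ) • τ (star c * c) - τ (star (m.fst c) * m.fst c) := by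
    rw [hfst, mul_sub, map_sub, mul_smul_comm, τ.map_smul_of_tower, star_fst_mul_fst]
  have := key ▸ hsplit
  have hre := congrArg Complex.re this
  simp only [Complex.sub_re, Complex.smul_re, smul_eq_mul] at hre
  linarith

end WithOrder

section Limits

variable [PartialOrder A] [StarOrderedRing A] {τ : A →L[ℂ] ℂ}

lemma sq_le_self' {u : A} (h0 : 0 ≤ u) (h1 : ‖u‖ ≤ 1) : u * u ≤ u := by
  have hsa : IsSelfAdjoint u := .of_nonneg h0
  have hsq : IsSelfAdjoint (u * u) := by
    simpa [hsa.star_eq] using IsSelfAdjoint.star_mul_self u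
  rw [← Unitization.inr_le_iff (u * u) u hsq hsa, Unitization.inr_mul]
  have h0' : 0 ≤ (u : Unitization ℂ A) := Unitization.inr_nonneg_iff.mpr h0
  have h1' : (u : Unitization ℂ A) ≤ 1 := by
    have := (CStarAlgebra.mem_Icc_iff_norm_le_one
      (x := (u : Unitization ℂ A))).mpr ⟨h0', by rwa [Unitization.norm_inr]⟩
    exact this.2
  simpa [pow_two] using CStarAlgebra.pow_antitone h0' h1' one_le_two

lemma tau_cs_one (hpos : ∀ a : A, 0 ≤ τ (star a * a)) (y : A) :
    ‖τ y‖ ^ 2 ≤ ‖τ‖ * (τ (star y * y)).re := by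
  have hl := CStarAlgebra.increasingApproximateUnit (A := A)
  haveI := hl.neBot
  have h1 : Tendsto (fun e : A => e * y) (CStarAlgebra.approximateUnit A) (𝓝 y) :=
    hl.tendsto_mul_right y
  have htend : Tendsto (fun e : A => ‖τ (e * y)‖ ^ 2) (CStarAlgebra.approximateUnit A)
      (𝓝 (‖τ y‖ ^ 2)) := by
    have h2 := (τ.continuous.tendsto y).comp h1
    exact (h2.norm.pow 2)
  refine le_of_tendsto htend ?_
  filter_upwards [hl.eventually_nonneg, hl.eventually_norm] with e he hen
  have hsa : star e = e := (IsSelfAdjoint.of_nonneg he).star_eq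
  have hcs : ‖τ (star e * y)‖ ^ 2 ≤ (τ (star e * e)).re * (τ (star y * y)).re :=
    tau_cs hpos e y
  rw [hsa] at hcs
  have hb : (τ (e * e)).re ≤ ‖τ‖ := by
    have h3 := tau_re_le (τ := τ) e
    rw [hsa] at h3
    have h4 : ‖e‖ ^ 2 ≤ 1 := by nlinarith [norm_nonneg e]
    nlinarith [norm_nonneg τ, mul_le_mul_of_nonneg_left h4 (norm_nonneg τ)]
  have h2 : 0 ≤ (τ (star y * y)).re := tau_re_nonneg hpos y
  nlinarith

lemma cross_bound (hpos : ∀ a : A, 0 ≤ τ (star a * a))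
    (htr : ∀ a b : A, τ (a * b) = τ (b * a)) (x y : A) :
    ‖τ (x * y)‖ ^ 2 ≤ (τ (star x * x)).re * (τ (star y * y)).re := by
  have h := tau_cs hpos (star x) y
  rw [star_star] at h
  rwa [htr x (star x)] at h

/-- The supremum of `τ` on the nonneg. part of the unit ball. -/
noncomputable def Lsup (τ : A →L[ℂ] ℂ) : ℝ :=
  sSup ((fun e => (τ e).re) '' {x : A | 0 ≤ x ∧ ‖x‖ ≤ 1})

lemma Lsup_bddAbove (τ : A →L[ℂ] ℂ) :
    BddAbove ((fun e => (τ e).re) '' {x : A | 0 ≤ x ∧ ‖x‖ ≤ 1}) := by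
  refine ⟨‖τ‖, ?_⟩
  rintro r ⟨x, ⟨hx0, hx1⟩, rfl⟩
  calc (τ x).re ≤ ‖τ x‖ := Complex.re_le_norm _
    _ ≤ ‖τ‖ * ‖x‖ := τ.le_opNorm x
    _ ≤ ‖τ‖ := by nlinarith [norm_nonneg τ]

lemma le_Lsup {x : A} (h0 : 0 ≤ x) (h1 : ‖x‖ ≤ 1) : (τ x).re ≤ Lsup τ :=
  le_csSup (Lsup_bddAbove τ) ⟨x, ⟨h0, h1⟩, rfl⟩

lemma tendsto_Lsup (hpos : ∀ a : A, 0 ≤ τ (star a * a)) :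
    Tendsto (fun e => (τ e).re) (CStarAlgebra.approximateUnit A) (𝓝 (Lsup τ)) := by
  rw [Metric.tendsto_nhds]
  intro ε hε
  have hne : ((fun e => (τ e).re) '' {x : A | 0 ≤ x ∧ ‖x‖ ≤ 1}).Nonempty :=
    ⟨(τ 0).re, 0, by simp, rfl⟩
  obtain ⟨r, hrS, hrgt⟩ := exists_lt_of_lt_csSup hne
    (show Lsup τ - ε / 2 < Lsup τ by linarith)
  obtain ⟨a0, ⟨ha0pos, ha0norm⟩, rfl⟩ := hrS
  set δ : ℝ := min (ε / (2 * (‖τ‖ + 1))) (1 / 2) with hδdef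
  have hδpos : 0 < δ := by
    apply lt_min _ (by norm_num)
    positivity
  have hδle : δ ≤ 1 / 2 := min_le_right _ _
  set a : A := (1 - δ) • a0 with hadef
  have h1δ : (0 : ℝ) ≤ 1 - δ := by linarith
  have hapos : 0 ≤ a := smul_nonneg'' h1δ ha0pos
  have hanorm : ‖a‖ < 1 := by
    rw [hadef, norm_smul, Real.norm_eq_abs, abs_of_nonneg h1δ]
    nlinarith
  have ha0re : 0 ≤ (τ a0).re := by
    have h := tau_nonneg hpos ha0pos
    rw [Complex.le_def] at h
    simpa using h.1
  have ha0le : (τ a0).re ≤ ‖τ‖ := by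
    calc (τ a0).re ≤ ‖τ a0‖ := Complex.re_le_norm _
      _ ≤ ‖τ‖ * ‖a0‖ := τ.le_opNorm a0
      _ ≤ ‖τ‖ := by nlinarith [norm_nonneg τ]
  have hta : Lsup τ - ε < (τ a).re := by
    have hre : (τ a).re = (1 - δ) * (τ a0).re := by
      rw [hadef, τ.map_smul_of_tower, Complex.smul_re, smul_eq_mul]
    have hdrop : δ * (τ a0).re ≤ ε / 2 := by
      have h1 : δ ≤ ε / (2 * (‖τ‖ + 1)) := min_le_left _ _
      have h2 : δ * (τ a0).re ≤ δ * ‖τ‖ := by nlinarith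
      have h3 : δ * ‖τ‖ ≤ ε / (2 * (‖τ‖ + 1)) * ‖τ‖ := by nlinarith [norm_nonneg τ]
      have h4 : ε / (2 * (‖τ‖ + 1)) * ‖τ‖ ≤ ε / 2 := by
        rw [div_mul_eq_mul_div, div_le_div_iff₀ (by positivity) (by norm_num)]
        nlinarith [norm_nonneg τ]
      linarith
    have : (τ a).re = (τ a0).re - δ * (τ a0).re := by rw [hre]; ring
    linarith
  rw [(CStarAlgebra.hasBasis_approximateUnit A).eventually_iff]
  refine ⟨a, ⟨hapos, hanorm⟩, ?_⟩
  rintro x ⟨hax, hxball⟩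
  have hx0 : 0 ≤ x := hapos.trans hax
  have hx1 : ‖x‖ ≤ 1 := by simpa using mem_closedBall_zero_iff.mp hxball
  have hup : (τ x).re ≤ Lsup τ := le_Lsup hx0 hx1
  have hlo : (τ a).re ≤ (τ x).re := tau_mono hpos hax
  rw [Real.dist_eq, abs_lt]
  constructor <;> linarith

lemma exists_good (hpos : ∀ a : A, 0 ≤ τ (star a * a)) {ε : ℝ} (hε : 0 < ε) :
    ∃ W ∈ CStarAlgebra.approximateUnit A,
      (∀ e ∈ W, 0 ≤ e ∧ ‖e‖ ≤ 1) ∧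
      ∀ e ∈ W, ∀ f ∈ W, (τ ((e - f) * (e - f))).re < ε := by
  have h8 : 0 < ε / 8 := by linarith
  have hev : ∀ᶠ e in CStarAlgebra.approximateUnit A, |(τ e).re - Lsup τ| < ε / 8 := by
    have := Metric.tendsto_nhds.mp (tendsto_Lsup hpos) (ε / 8) h8
    simpa [Real.dist_eq] using this
  obtain ⟨a0, ⟨ha0, ha0n⟩, hsub⟩ :=
    (CStarAlgebra.hasBasis_approximateUnit A).eventually_iff.mp hev
  have ha0mem : a0 ∈ {x | a0 ≤ x} ∩ Metric.closedBall 0 1 :=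
    ⟨le_refl _, by simpa using ha0n.le⟩
  have ha0val : |(τ a0).re - Lsup τ| < ε / 8 := hsub ha0mem
  refine ⟨{x | a0 ≤ x} ∩ Metric.closedBall 0 1,
    (CStarAlgebra.hasBasis_approximateUnit A).mem_of_mem ⟨ha0, ha0n⟩, ?_, ?_⟩
  · rintro e ⟨hae, he1⟩
    exact ⟨ha0.trans hae, by simpa using mem_closedBall_zero_iff.mp he1⟩
  · rintro e ⟨hae, he1⟩ f ⟨haf, hf1⟩
    have he0 : 0 ≤ e := ha0.trans hae
    have hf0 : 0 ≤ f := ha0.trans haf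
    have he1' : ‖e‖ ≤ 1 := by simpa using mem_closedBall_zero_iff.mp he1
    have hf1' : ‖f‖ ≤ 1 := by simpa using mem_closedBall_zero_iff.mp hf1
    have heval : |(τ e).re - Lsup τ| < ε / 8 := hsub ⟨hae, he1⟩
    have hfval : |(τ f).re - Lsup τ| < ε / 8 := hsub ⟨haf, hf1⟩
    set u : A := e - a0 with hudef
    set w : A := f - a0 with hwdef
    have hu0 : 0 ≤ u := sub_nonneg.mpr hae
    have hw0 : 0 ≤ w := sub_nonneg.mpr haf
    have hue : u ≤ e := sub_le_self e ha0
    have hwf : w ≤ f := sub_le_self f ha0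
    have hun : ‖u‖ ≤ 1 := (CStarAlgebra.norm_le_norm_of_nonneg_of_le hu0 hue).trans he1'
    have hwn : ‖w‖ ≤ 1 := (CStarAlgebra.norm_le_norm_of_nonneg_of_le hw0 hwf).trans hf1'
    have huu : u * u ≤ u := sq_le_self' hu0 hun
    have hww : w * w ≤ w := sq_le_self' hw0 hwn
    have husa : IsSelfAdjoint u := .of_nonneg hu0
    have hwsa : IsSelfAdjoint w := .of_nonneg hw0
    have hid : (e - f) * (e - f) + (u + w) * (u + w) = u * u + u * u + (w * w + w * w) := by
      have hef : e - f = u - w := by rw [hudef, hwdef]; abel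
      rw [hef]
      noncomm_ring
    have hre : (τ ((e - f) * (e - f))).re
        = (τ (u * u)).re + (τ (u * u)).re + ((τ (w * w)).re + (τ (w * w)).re)
          - (τ ((u + w) * (u + w))).re := by
      have := congrArg (fun z : A => (τ z).re) hid
      simp only [map_add, Complex.add_re] at this
      linarith
    have hposq : 0 ≤ (τ ((u + w) * (u + w))).re := by
      have hsa : star (u + w) = u + w := by rw [star_add, husa.star_eq, hwsa.star_eq]
      have := tau_re_nonneg hpos (u + w)
      rwa [hsa] at this
    have h2u : (τ (u * u)).re ≤ (τ u).re := tau_mono hpos huu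
    have h2w : (τ (w * w)).re ≤ (τ w).re := tau_mono hpos hww
    have h3u : (τ u).re < ε / 4 := by
      have : (τ u).re = (τ e).re - (τ a0).re := by
        rw [hudef, map_sub, Complex.sub_re]
      rw [abs_lt] at heval ha0val
      rw [this]
      linarith [heval.2, ha0val.1]
    have h3w : (τ w).re < ε / 4 := by
      have : (τ w).re = (τ f).re - (τ a0).re := by
        rw [hwdef, map_sub, Complex.sub_re]
      rw [abs_lt] at hfval ha0val
      rw [this]
      linarith [hfval.2, ha0val.1]
    linarith

end Limits


section Main

variable [PartialOrder A] [StarOrderedRing A] {τ : A →L[ℂ] ℂ}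

lemma exists_lim (hpos : ∀ a : A, 0 ≤ τ (star a * a)) (m : 𝓜(ℂ, A)) :
    ∃ z, Tendsto (fun e => τ (m.fst e)) (CStarAlgebra.approximateUnit A) (𝓝 z) := by
  haveI := (CStarAlgebra.increasingApproximateUnit (A := A)).neBot
  rw [← cauchy_map_iff_exists_tendsto, cauchy_map_iff]
  refine ⟨‹_›, ?_⟩
  rw [Metric.uniformity_basis_dist.tendsto_right_iff]
  intro ε hε
  set K : ℝ := ‖τ‖ * ‖m‖ ^ 2 + 1 with hKdef
  have hK : 0 < K := by positivity
  have hKnn : 0 ≤ ‖τ‖ * ‖m‖ ^ 2 := by positivity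
  obtain ⟨W, hWl, hWb, hWs⟩ := exists_good hpos (show 0 < ε ^ 2 / K by positivity)
  filter_upwards [prod_mem_prod hWl hWl] with p hp
  obtain ⟨hp1, hp2⟩ := hp
  set c : A := p.1 - p.2 with hcdef
  have csa : star c = c := by
    rw [hcdef, star_sub, (IsSelfAdjoint.of_nonneg (hWb _ hp1).1).star_eq,
      (IsSelfAdjoint.of_nonneg (hWb _ hp2).1).star_eq]
  have hd : dist (τ (m.fst p.1)) (τ (m.fst p.2)) = ‖τ (m.fst c)‖ := by
    rw [dist_eq_norm, ← map_sub, ← map_sub]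
  have est1 : ‖τ (m.fst c)‖ ^ 2 ≤ ‖τ‖ * (τ (star (m.fst c) * m.fst c)).re :=
    tau_cs_one hpos _
  have est2 : (τ (star (m.fst c) * m.fst c)).re ≤ ‖m‖ ^ 2 * (τ (star c * c)).re :=
    conj_bound hpos m c
  have est3 : (τ (star c * c)).re < ε ^ 2 / K := by
    rw [csa]; exact hWs _ hp1 _ hp2
  have hre0 : 0 ≤ (τ (star c * c)).re := tau_re_nonneg hpos c
  have hfinal : ‖τ (m.fst c)‖ ^ 2 < ε ^ 2 := by
    have s1 : ‖τ (m.fst c)‖ ^ 2 ≤ ‖τ‖ * (‖m‖ ^ 2 * (τ (star c * c)).re) :=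
      le_trans est1 (mul_le_mul_of_nonneg_left est2 (norm_nonneg τ))
    have s2 : ‖τ‖ * (‖m‖ ^ 2 * (τ (star c * c)).re)
        = (‖τ‖ * ‖m‖ ^ 2) * (τ (star c * c)).re := by ring
    have s3 : (‖τ‖ * ‖m‖ ^ 2) * (τ (star c * c)).re ≤ (‖τ‖ * ‖m‖ ^ 2) * (ε ^ 2 / K) :=
      mul_le_mul_of_nonneg_left est3.le hKnn
    have s4 : (‖τ‖ * ‖m‖ ^ 2) * (ε ^ 2 / K) < K * (ε ^ 2 / K) := by
      have : (0 : ℝ) < ε ^ 2 / K := by positivity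
      have hlt : ‖τ‖ * ‖m‖ ^ 2 < K := by rw [hKdef]; linarith
      exact mul_lt_mul_of_pos_right hlt this
    have s5 : K * (ε ^ 2 / K) = ε ^ 2 := by field_simp
    linarith
  rw [hd]
  have := lt_of_pow_lt_pow_left₀ 2 hε.le hfinal
  simpa using this

set_option maxHeartbeats 2000000 in
lemma exists_joint (hpos : ∀ a : A, 0 ≤ τ (star a * a))
    (htr : ∀ a b : A, τ (a * b) = τ (b * a)) (m n : 𝓜(ℂ, A)) :
    ∃ J, Tendsto (fun p : A × A => τ (m.fst p.1 * n.fst p.2))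
      ((CStarAlgebra.approximateUnit A) ×ˢ (CStarAlgebra.approximateUnit A)) (𝓝 J) := by
  haveI := (CStarAlgebra.increasingApproximateUnit (A := A)).neBot
  rw [← cauchy_map_iff_exists_tendsto, cauchy_map_iff]
  refine ⟨by infer_instance, ?_⟩
  rw [Metric.uniformity_basis_dist.tendsto_right_iff]
  intro ε hε
  set K : ℝ := (‖τ‖ + 1) * ((‖m‖ + 1) ^ 2 * (‖n‖ + 1) ^ 2) with hKdef
  have hK : 0 < K := by positivity
  obtain ⟨W, hWl, hWb, hWs⟩ := exists_good hpos (show 0 < ε ^ 2 / (4 * K) by positivity)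
  have hWW : W ×ˢ W ∈ (CStarAlgebra.approximateUnit A) ×ˢ (CStarAlgebra.approximateUnit A) :=
    prod_mem_prod hWl hWl
  filter_upwards [prod_mem_prod hWW hWW] with q hq
  obtain ⟨⟨e, f⟩, e', f'⟩ := q
  obtain ⟨⟨he, hf⟩, he', hf'⟩ := hq
  simp only at he hf he' hf' ⊢
  -- bound for difference in the first variable
  have bound1 : ∀ {x x' y : A}, x ∈ W → x' ∈ W → y ∈ W →
      dist (τ (m.fst x * n.fst y)) (τ (m.fst x' * n.fst y)) < ε / 2 := by
    intro x x' y hx hx' hy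
    have hcsa : star (x - x') = x - x' := by
      rw [star_sub, (IsSelfAdjoint.of_nonneg (hWb _ hx).1).star_eq,
        (IsSelfAdjoint.of_nonneg (hWb _ hx').1).star_eq]
    have hd : dist (τ (m.fst x * n.fst y)) (τ (m.fst x' * n.fst y))
        = ‖τ (m.fst (x - x') * n.fst y)‖ := by
      rw [dist_eq_norm, ← map_sub, ← sub_mul, ← map_sub]
    have hcb := cross_bound hpos htr (m.fst (x - x')) (n.fst y)
    have e1 : (τ (star (m.fst (x - x')) * m.fst (x - x'))).re
        ≤ ‖m‖ ^ 2 * (τ (star (x - x') * (x - x'))).re := conj_bound hpos m _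
    have e2 : (τ (star (x - x') * (x - x'))).re < ε ^ 2 / (4 * K) := by
      rw [hcsa]; exact hWs _ hx _ hx'
    have e2' : 0 ≤ (τ (star (x - x') * (x - x'))).re := tau_re_nonneg hpos _
    have e3 : (τ (star (n.fst y) * n.fst y)).re ≤ ‖τ‖ * (‖n‖ + 1) ^ 2 := by
      have h5 := tau_re_le (τ := τ) (n.fst y)
      have h6 : ‖n.fst y‖ ≤ ‖n‖ := by
        have := norm_fst_apply_le n y
        have hy1 : ‖y‖ ≤ 1 := (hWb _ hy).2
        nlinarith [norm_nonneg n]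
      have h7 : ‖n.fst y‖ ^ 2 ≤ (‖n‖ + 1) ^ 2 := by nlinarith [norm_nonneg (n.fst y)]
      nlinarith [norm_nonneg τ]
    have e3' : 0 ≤ (τ (star (n.fst y) * n.fst y)).re := tau_re_nonneg hpos _
    have e1' : 0 ≤ (τ (star (m.fst (x - x')) * m.fst (x - x'))).re := tau_re_nonneg hpos _
    have hsq : ‖τ (m.fst (x - x') * n.fst y)‖ ^ 2 < (ε / 2) ^ 2 := by
      have c1 : ‖τ (m.fst (x - x') * n.fst y)‖ ^ 2
          ≤ (‖m‖ ^ 2 * (ε ^ 2 / (4 * K))) * (‖τ‖ * (‖n‖ + 1) ^ 2) := by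
        have u1 : (τ (star (m.fst (x - x')) * m.fst (x - x'))).re
            ≤ ‖m‖ ^ 2 * (ε ^ 2 / (4 * K)) := by nlinarith [sq_nonneg ‖m‖]
        calc ‖τ (m.fst (x - x') * n.fst y)‖ ^ 2
            ≤ (τ (star (m.fst (x - x')) * m.fst (x - x'))).re
              * (τ (star (n.fst y) * n.fst y)).re := hcb
          _ ≤ (‖m‖ ^ 2 * (ε ^ 2 / (4 * K))) * (‖τ‖ * (‖n‖ + 1) ^ 2) := by
              apply mul_le_mul u1 e3 e3' (by positivity)
      have c2 : (‖m‖ ^ 2 * (ε ^ 2 / (4 * K))) * (‖τ‖ * (‖n‖ + 1) ^ 2) < (ε / 2) ^ 2 := by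
        have hlt : ‖m‖ ^ 2 * (‖τ‖ * (‖n‖ + 1) ^ 2) < K := by
          rw [hKdef]
          nlinarith [norm_nonneg m, norm_nonneg n, norm_nonneg τ, sq_nonneg (‖m‖ + 1),
            sq_nonneg (‖n‖ + 1), mul_nonneg (norm_nonneg m) (norm_nonneg n)]
        have heq : (‖m‖ ^ 2 * (ε ^ 2 / (4 * K))) * (‖τ‖ * (‖n‖ + 1) ^ 2)
            = (‖m‖ ^ 2 * (‖τ‖ * (‖n‖ + 1) ^ 2)) * (ε ^ 2 / (4 * K)) := by ring
        have hp2 : (0 : ℝ) < ε ^ 2 / (4 * K) := by positivity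
        calc (‖m‖ ^ 2 * (ε ^ 2 / (4 * K))) * (‖τ‖ * (‖n‖ + 1) ^ 2)
            = (‖m‖ ^ 2 * (‖τ‖ * (‖n‖ + 1) ^ 2)) * (ε ^ 2 / (4 * K)) := heq
          _ < K * (ε ^ 2 / (4 * K)) := mul_lt_mul_of_pos_right hlt hp2
          _ = ε ^ 2 / 4 := by field_simp
          _ = (ε / 2) ^ 2 := by ring
      linarith
    rw [hd]
    have := lt_of_pow_lt_pow_left₀ 2 (by positivity : (0:ℝ) ≤ ε / 2) hsq
    simpa using this
  -- bound for difference in the second variable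
  have bound2 : ∀ {x y y' : A}, x ∈ W → y ∈ W → y' ∈ W →
      dist (τ (m.fst x * n.fst y)) (τ (m.fst x * n.fst y')) < ε / 2 := by
    intro x y y' hx hy hy'
    have hcsa : star (y - y') = y - y' := by
      rw [star_sub, (IsSelfAdjoint.of_nonneg (hWb _ hy).1).star_eq,
        (IsSelfAdjoint.of_nonneg (hWb _ hy').1).star_eq]
    have hd : dist (τ (m.fst x * n.fst y)) (τ (m.fst x * n.fst y'))
        = ‖τ (m.fst x * n.fst (y - y'))‖ := by
      rw [dist_eq_norm, ← map_sub, ← mul_sub, ← map_sub]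
    have hcb := cross_bound hpos htr (m.fst x) (n.fst (y - y'))
    have e1 : (τ (star (n.fst (y - y')) * n.fst (y - y'))).re
        ≤ ‖n‖ ^ 2 * (τ (star (y - y') * (y - y'))).re := conj_bound hpos n _
    have e2 : (τ (star (y - y') * (y - y'))).re < ε ^ 2 / (4 * K) := by
      rw [hcsa]; exact hWs _ hy _ hy'
    have e2' : 0 ≤ (τ (star (y - y') * (y - y'))).re := tau_re_nonneg hpos _
    have e3 : (τ (star (m.fst x) * m.fst x)).re ≤ ‖τ‖ * (‖m‖ + 1) ^ 2 := by
      have h5 := tau_re_le (τ := τ) (m.fst x)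
      have h6 : ‖m.fst x‖ ≤ ‖m‖ := by
        have := norm_fst_apply_le m x
        have hy1 : ‖x‖ ≤ 1 := (hWb _ hx).2
        nlinarith [norm_nonneg m]
      have h7 : ‖m.fst x‖ ^ 2 ≤ (‖m‖ + 1) ^ 2 := by nlinarith [norm_nonneg (m.fst x)]
      nlinarith [norm_nonneg τ]
    have e3' : 0 ≤ (τ (star (m.fst x) * m.fst x)).re := tau_re_nonneg hpos _
    have e1' : 0 ≤ (τ (star (n.fst (y - y')) * n.fst (y - y'))).re := tau_re_nonneg hpos _
    have hsq : ‖τ (m.fst x * n.fst (y - y'))‖ ^ 2 < (ε / 2) ^ 2 := by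
      have u1 : (τ (star (n.fst (y - y')) * n.fst (y - y'))).re
          ≤ ‖n‖ ^ 2 * (ε ^ 2 / (4 * K)) := by nlinarith [sq_nonneg ‖n‖]
      have c1 : ‖τ (m.fst x * n.fst (y - y'))‖ ^ 2
          ≤ (‖τ‖ * (‖m‖ + 1) ^ 2) * (‖n‖ ^ 2 * (ε ^ 2 / (4 * K))) := by
        calc ‖τ (m.fst x * n.fst (y - y'))‖ ^ 2
            ≤ (τ (star (m.fst x) * m.fst x)).re
              * (τ (star (n.fst (y - y')) * n.fst (y - y'))).re := hcb
          _ ≤ (‖τ‖ * (‖m‖ + 1) ^ 2) * (‖n‖ ^ 2 * (ε ^ 2 / (4 * K))) := by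
              apply mul_le_mul e3 u1 e1' (by positivity)
      have c2 : (‖τ‖ * (‖m‖ + 1) ^ 2) * (‖n‖ ^ 2 * (ε ^ 2 / (4 * K))) < (ε / 2) ^ 2 := by
        have hlt : ‖n‖ ^ 2 * (‖τ‖ * (‖m‖ + 1) ^ 2) < K := by
          rw [hKdef]
          nlinarith [norm_nonneg m, norm_nonneg n, norm_nonneg τ, sq_nonneg (‖m‖ + 1),
            sq_nonneg (‖n‖ + 1), mul_nonneg (norm_nonneg m) (norm_nonneg n)]
        have hp2 : (0 : ℝ) < ε ^ 2 / (4 * K) := by positivity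
        calc (‖τ‖ * (‖m‖ + 1) ^ 2) * (‖n‖ ^ 2 * (ε ^ 2 / (4 * K)))
            = (‖n‖ ^ 2 * (‖τ‖ * (‖m‖ + 1) ^ 2)) * (ε ^ 2 / (4 * K)) := by ring
          _ < K * (ε ^ 2 / (4 * K)) := mul_lt_mul_of_pos_right hlt hp2
          _ = ε ^ 2 / 4 := by field_simp
          _ = (ε / 2) ^ 2 := by ring
      linarith
    rw [hd]
    have := lt_of_pow_lt_pow_left₀ 2 (by positivity : (0:ℝ) ≤ ε / 2) hsq
    simpa using this
  calc dist (τ (m.fst e * n.fst f)) (τ (m.fst e' * n.fst f'))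
      ≤ dist (τ (m.fst e * n.fst f)) (τ (m.fst e' * n.fst f))
        + dist (τ (m.fst e' * n.fst f)) (τ (m.fst e' * n.fst f')) := dist_triangle _ _ _
    _ < ε / 2 + ε / 2 := add_lt_add (bound1 he he' hf) (bound2 he' hf hf')
    _ = ε := by ring

lemma iterated_limit {ι : Type*} {l : Filter ι} [l.NeBot] {F : ι × ι → ℂ} {J : ℂ} {H : ι → ℂ}
    (hJ : Tendsto F (l ×ˢ l) (𝓝 J)) (hH : ∀ f, Tendsto (fun e => F (e, f)) l (𝓝 (H f))) :
    Tendsto H l (𝓝 J) := by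
  rw [Metric.tendsto_nhds]
  intro ε hε
  have h2 := Metric.tendsto_nhds.mp hJ (ε / 2) (by linarith)
  rw [eventually_prod_iff] at h2
  obtain ⟨pa, hpa, pb, hpb, hpab⟩ := h2
  filter_upwards [hpb] with f hf
  have hle : dist (H f) J ≤ ε / 2 := by
    refine le_of_tendsto ((hH f).dist tendsto_const_nhds) ?_
    filter_upwards [hpa] with e he
    exact (hpab he hf).le
  linarith

set_option maxHeartbeats 2000000 in
lemma main (τ : A →L[ℂ] ℂ)
    (hpos : ∀ a : A, 0 ≤ τ (star a * a)) (htr : ∀ a b : A, τ (a * b) = τ (b * a)) :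
    ∃ τ' : 𝓜(ℂ, A) →L[ℂ] ℂ,
      ‖τ'‖ = ‖τ‖ ∧
      (∀ m : 𝓜(ℂ, A), 0 ≤ τ' (star m * m)) ∧
      (∀ m n : 𝓜(ℂ, A), τ' (m * n) = τ' (n * m)) ∧
      (∀ a : A, τ' (a : 𝓜(ℂ, A)) = τ a) := by
  have hl := CStarAlgebra.increasingApproximateUnit (A := A)
  haveI := hl.neBot
  choose v hv using fun m : 𝓜(ℂ, A) => exists_lim hpos m
  have hadd : ∀ m n : 𝓜(ℂ, A), v (m + n) = v m + v n := by
    intro m n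
    refine tendsto_nhds_unique (hv (m + n)) ?_
    have h := (hv m).add (hv n)
    refine h.congr fun e => ?_
    rw [← map_add]
    congr 1
  have hsmul : ∀ (c : ℂ) (m : 𝓜(ℂ, A)), v (c • m) = c • v m := by
    intro c m
    refine tendsto_nhds_unique (hv (c • m)) ?_
    have h := (hv m).const_smul c
    refine h.congr fun e => ?_
    rw [← map_smul]
    congr 1
  have hbound : ∀ m : 𝓜(ℂ, A), ‖v m‖ ≤ ‖τ‖ * ‖m‖ := by
    intro m
    refine le_of_tendsto (hv m).norm ?_
    filter_upwards [hl.eventually_norm] with e he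
    calc ‖τ (m.fst e)‖ ≤ ‖τ‖ * ‖m.fst e‖ := τ.le_opNorm _
      _ ≤ ‖τ‖ * (‖m‖ * ‖e‖) :=
          mul_le_mul_of_nonneg_left (norm_fst_apply_le m e) (norm_nonneg τ)
      _ ≤ ‖τ‖ * ‖m‖ := by
          nlinarith [norm_nonneg τ, norm_nonneg m, norm_nonneg e,
            mul_nonneg (norm_nonneg τ) (norm_nonneg m)]
  set τ'L : 𝓜(ℂ, A) →ₗ[ℂ] ℂ :=
    { toFun := v
      map_add' := hadd
      map_smul' := hsmul } with hτ'Ldef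
  set τ' : 𝓜(ℂ, A) →L[ℂ] ℂ := LinearMap.mkContinuous τ'L ‖τ‖ hbound with hτ'def
  have happly : ∀ m, τ' m = v m := fun m => rfl
  have hcoe_norm : ∀ a : A, ‖(a : 𝓜(ℂ, A))‖ = ‖a‖ := fun a => by
    rw [← norm_fst, coe_fst]
    exact ContinuousLinearMap.opNorm_mul_apply ℂ A a
  have hext : ∀ a : A, τ' ((a : 𝓜(ℂ, A))) = τ a := by
    intro a
    rw [happly]
    refine tendsto_nhds_unique (hv _) ?_
    have h1 : Tendsto (fun e : A => a * e) (CStarAlgebra.approximateUnit A) (𝓝 a) :=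
      hl.tendsto_mul_left a
    have h2 := (τ.continuous.tendsto a).comp h1
    refine h2.congr fun e => ?_
    congr 1
  have hnorm : ‖τ'‖ = ‖τ‖ := by
    refine le_antisymm (LinearMap.mkContinuous_norm_le _ (norm_nonneg τ) _) ?_
    refine τ.opNorm_le_bound (norm_nonneg τ') fun a => ?_
    rw [← hext a]
    calc ‖τ' ((a : 𝓜(ℂ, A)))‖ ≤ ‖τ'‖ * ‖(a : 𝓜(ℂ, A))‖ := τ'.le_opNorm _
      _ = ‖τ'‖ * ‖a‖ := by rw [hcoe_norm]
  have hposv : ∀ m : 𝓜(ℂ, A), 0 ≤ τ' (star m * m) := by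
    intro m
    rw [happly]
    have hcl : IsClosed {z : ℂ | 0 ≤ z} := by
      have hset : {z : ℂ | 0 ≤ z} = {z : ℂ | (0:ℝ) = z.im} ∩ {z : ℂ | 0 ≤ z.re} := by
        ext z
        simp [Complex.le_def, and_comm]
      rw [hset]
      exact (isClosed_eq continuous_const Complex.continuous_im).inter
        (isClosed_le continuous_const Complex.continuous_re)
    refine hcl.mem_of_tendsto (hv _) ?_
    filter_upwards [hl.eventually_nonneg] with e he
    show 0 ≤ τ ((star m * m).fst e)
    set s : A := CFC.sqrt e with hsdef
    have hss : s * s = e := CFC.sqrt_mul_sqrt_self e he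
    have hs0 : 0 ≤ s := CFC.sqrt_nonneg e
    have hssa : star s = s := (IsSelfAdjoint.of_nonneg hs0).star_eq
    have h1 : (star m * m).fst e = (star m * m).fst s * s := by
      rw [← hss, fst_mul_right]
    rw [h1, htr]
    have h2 : s * (star m * m).fst s = star (m.fst s) * m.fst s := by
      have h := star_fst_mul_fst m s
      rwa [hssa] at h
    rw [h2]
    exact hpos _
  have key : ∀ (m n : 𝓜(ℂ, A)) (J' : ℂ),
      Tendsto (fun p : A × A => τ (m.fst p.1 * n.fst p.2))
        ((CStarAlgebra.approximateUnit A) ×ˢ (CStarAlgebra.approximateUnit A)) (𝓝 J') →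
      v (m * n) = J' := by
    intro m n J' hJ'
    refine tendsto_nhds_unique (hv (m * n))
      (iterated_limit hJ' (H := fun f => τ ((m * n).fst f)) fun f => ?_)
    have h1 : Tendsto (fun e : A => e * n.fst f) (CStarAlgebra.approximateUnit A)
        (𝓝 (n.fst f)) := hl.tendsto_mul_right _
    have h2 := (τ.continuous.tendsto _).comp ((m.fst.continuous.tendsto _).comp h1)
    have h4 : τ (m.fst (n.fst f)) = τ ((m * n).fst f) := by
      congr 1
    have h2' : Tendsto (fun e : A => τ (m.fst (e * n.fst f)))
        (CStarAlgebra.approximateUnit A) (𝓝 (τ (m.fst (n.fst f)))) := h2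
    rw [h4] at h2'
    refine h2'.congr fun e => ?_
    rw [fst_mul_right]
  have htrv : ∀ m n : 𝓜(ℂ, A), τ' (m * n) = τ' (n * m) := by
    intro m n
    rw [happly, happly]
    obtain ⟨J, hJ⟩ := exists_joint hpos htr m n
    have hmn : v (m * n) = J := key m n J hJ
    have hswapmap : Tendsto (Prod.swap : A × A → A × A)
        ((CStarAlgebra.approximateUnit A) ×ˢ (CStarAlgebra.approximateUnit A))
        ((CStarAlgebra.approximateUnit A) ×ˢ (CStarAlgebra.approximateUnit A)) := by
      rw [Filter.tendsto_def]
      intro U hU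
      rw [Filter.mem_prod_iff] at hU
      obtain ⟨S, hS, T, hT, hST⟩ := hU
      rw [Filter.mem_prod_iff]
      refine ⟨T, hT, S, hS, ?_⟩
      rintro ⟨x, y⟩ ⟨hx, hy⟩
      exact hST ⟨hy, hx⟩
    have h5 := hJ.comp hswapmap
    have hswap : Tendsto (fun p : A × A => τ (n.fst p.1 * m.fst p.2))
        ((CStarAlgebra.approximateUnit A) ×ˢ (CStarAlgebra.approximateUnit A)) (𝓝 J) := by
      refine h5.congr fun p => ?_
      exact htr _ _
    have hnm : v (n * m) = J := key n m J hswap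
    rw [hmn, hnm]
  exact ⟨τ', hnorm, hposv, htrv, hext⟩

end Main


end TraceExtensionAux

/-- Every continuous positive tracial linear functional `τ` on a C*-algebra `A` extends to a
continuous positive tracial linear functional on the multiplier algebra `𝓜(ℂ, A)` of the same
norm. -/
theorem exists_trace_extension_to_multiplier_algebra
    {A : Type*} [NonUnitalCStarAlgebra A]
    (τ : A →L[ℂ] ℂ)
    (hτ_pos : ∀ a : A, 0 ≤ τ (star a * a))
    (hτ_tracial : ∀ a b : A, τ (a * b) = τ (b * a)) :
    ∃ τ' : 𝓜(ℂ, A) →L[ℂ] ℂ,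
      ‖τ'‖ = ‖τ‖ ∧
      (∀ m : 𝓜(ℂ, A), 0 ≤ τ' (star m * m)) ∧
      (∀ m n : 𝓜(ℂ, A), τ' (m * n) = τ' (n * m)) ∧
      (∀ a : A, τ' (a : 𝓜(ℂ, A)) = τ a) := by
  letI := TraceExtensionAux.pOrd (A := A)
  haveI : StarOrderedRing A := TraceExtensionAux.sOrd (A := A)
  exact TraceExtensionAux.main τ hτ_pos hτ_tracial
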